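/- Every symmetric tensor T ∈ Sym(n,d) (n ≥ 2, d ≥ 2) has a symmetric best rank one approximation: there exist λ ∈ ℝ and a unit vector u ∈ S^{n−1} such that ‖T − λ·u^{⊗d}‖ ≤ ‖T − s·x₁⊗…⊗x_d‖ for all s ∈ ℝ and unit vectors x₁,…,x_d. -/

import Mathlib

noncomputable section

/-- The decomposable tensor `x₁ ⊗ ⋯ ⊗ x_d`, as a multi-indexed array. -/
def dtens {ι : Type*} [Fintype ι] {n : ι → ℕ} (x : ∀ j, Fin (n j) → ℝ) :
    (∀ j, Fin (n j)) → ℝ :=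
  fun idx => ∏ j, x j (idx j)

/-- Entrywise inner product of tensors. -/
def tinner {ι : Type*} [Fintype ι] [DecidableEq ι] {n : ι → ℕ}
    (S T : (∀ j, Fin (n j)) → ℝ) : ℝ :=
  ∑ idx, S idx * T idx

/-- Hilbert–Schmidt norm of a tensor. -/
def hsNorm {ι : Type*} [Fintype ι] [DecidableEq ι] {n : ι → ℕ}
    (T : (∀ j, Fin (n j)) → ℝ) : ℝ :=
  Real.sqrt (∑ idx, T idx ^ 2)

/-- `v` is a unit vector in `ℝ^m`. -/
def isUnitVec {m : ℕ} (v : Fin m → ℝ) : Prop := ∑ i, v i ^ 2 = 1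

/-- The spectral (`(∞,2)`-Schatten) norm of a tensor: the supremum of
`|⟨T, x₁ ⊗ ⋯ ⊗ x_d⟩|` over unit vectors `x_j`. -/
def specNorm {ι : Type*} [Fintype ι] [DecidableEq ι] {n : ι → ℕ}
    (T : (∀ j, Fin (n j)) → ℝ) : ℝ :=
  sSup {r | ∃ x : ∀ j, Fin (n j) → ℝ, (∀ j, isUnitVec (x j)) ∧ r = |tinner T (dtens x)|}

namespace Stmt10Aux

variable {n d : ℕ}

/-- multilinear form value -/
def F (T : (Fin d → Fin n) → ℝ) (x : Fin d → Fin n → ℝ) : ℝ :=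
  ∑ idx, T idx * ∏ j, x j (idx j)

lemma tinner_dtens (T : (Fin d → Fin n) → ℝ) (x : Fin d → Fin n → ℝ) :
    tinner T (dtens x) = F T x := rfl

lemma prod_update (x : Fin d → Fin n → ℝ) (a : Fin d) (w : Fin n → ℝ)
    (idx : Fin d → Fin n) :
    (∏ j, Function.update x a w j (idx j))
      = w (idx a) * ∏ j ∈ Finset.univ.erase a, x j (idx j) := by
  have h : ∀ j, Function.update x a w j (idx j)
      = Function.update (fun j => x j (idx j)) a (w (idx a)) j := by
    intro j
    rcases eq_or_ne j a with h | h
    · subst h; simp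
    · simp [Function.update_of_ne h]
  rw [Finset.prod_congr rfl fun j _ => h j,
    Finset.prod_update_of_mem (Finset.mem_univ a), Finset.erase_eq]

lemma F_update_eq (T : (Fin d → Fin n) → ℝ) (x : Fin d → Fin n → ℝ) (a : Fin d)
    (w : Fin n → ℝ) :
    F T (Function.update x a w)
      = ∑ idx, T idx * (w (idx a) * ∏ j ∈ Finset.univ.erase a, x j (idx j)) :=
  Finset.sum_congr rfl fun idx _ => by rw [prod_update]

lemma F_update_smul (T : (Fin d → Fin n) → ℝ) (x : Fin d → Fin n → ℝ) (a : Fin d)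
    (r : ℝ) (w : Fin n → ℝ) :
    F T (Function.update x a (r • w)) = r * F T (Function.update x a w) := by
  rw [F_update_eq, F_update_eq, Finset.mul_sum]
  exact Finset.sum_congr rfl fun idx _ => by simp [Pi.smul_apply]; ring

lemma F_update_neg (T : (Fin d → Fin n) → ℝ) (x : Fin d → Fin n → ℝ) (a : Fin d)
    (w : Fin n → ℝ) :
    F T (Function.update x a (-w)) = - F T (Function.update x a w) := by
  have := F_update_smul T x a (-1) w
  simpa using this

lemma F_update_expand (T : (Fin d → Fin n) → ℝ) (x : Fin d → Fin n → ℝ) (a : Fin d)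
    (v : Fin n → ℝ) :
    F T (Function.update x a v)
      = ∑ p, v p * F T (Function.update x a (Pi.single p 1)) := by
  rw [F_update_eq]
  have : ∀ p : Fin n, v p * F T (Function.update x a (Pi.single p 1))
      = ∑ idx, v p * (T idx * ((Pi.single p 1 : Fin n → ℝ) (idx a) *
          ∏ j ∈ Finset.univ.erase a, x j (idx j))) := by
    intro p; rw [F_update_eq, Finset.mul_sum]
  rw [Finset.sum_congr rfl fun p _ => this p, Finset.sum_comm]
  refine Finset.sum_congr rfl fun idx _ => ?_
  simp [Pi.single_apply, mul_ite, Finset.sum_ite_eq]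
  ring

lemma sum_sq_expand (v w : Fin n → ℝ) (c : ℝ) :
    ∑ i, (v i - c * w i)^2
      = (∑ i, (v i)^2) - 2*c*(∑ i, w i * v i) + c^2 * ∑ i, (w i)^2 := by
  rw [Finset.mul_sum, Finset.mul_sum, ← Finset.sum_sub_distrib, ← Finset.sum_add_distrib]
  exact Finset.sum_congr rfl fun i _ => by ring

lemma update_unitFam {x : Fin d → Fin n → ℝ} (hx : ∀ j, isUnitVec (x j)) {a : Fin d}
    {v : Fin n → ℝ} (hv : isUnitVec v) : ∀ j, isUnitVec (Function.update x a v j) := by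
  intro j
  rcases eq_or_ne j a with h | h
  · subst h; simpa
  · simpa [Function.update_of_ne h] using hx j

lemma grad_eq (T : (Fin d → Fin n) → ℝ) (M : ℝ) (hMpos : 0 < M)
    (hM : ∀ y, (∀ j, isUnitVec (y j)) → F T y ≤ M)
    (x : Fin d → Fin n → ℝ) (hx : ∀ j, isUnitVec (x j)) (hfx : F T x = M) (a : Fin d) :
    ∀ p, F T (Function.update x a (Pi.single p 1)) = M * x a p := by
  set w : Fin n → ℝ := fun p => F T (Function.update x a (Pi.single p 1)) with hw
  have hA : ∑ p, x a p * w p = M := by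
    have h := F_update_expand T x a (x a)
    rw [Function.update_eq_self, hfx] at h
    simp only [hw]
    exact h.symm
  set N : ℝ := ∑ p, (w p)^2 with hNdef
  have hNnonneg : 0 ≤ N := Finset.sum_nonneg fun p _ => sq_nonneg _
  have hN : N ≤ M^2 := by
    by_cases hN0 : N = 0
    · nlinarith
    · have hNpos : 0 < N := lt_of_le_of_ne hNnonneg (Ne.symm hN0)
      set t : ℝ := Real.sqrt N with htdef
      have htpos : 0 < t := Real.sqrt_pos.mpr hNpos
      have ht2 : t^2 = N := Real.sq_sqrt hNnonneg
      have hunit : isUnitVec (t⁻¹ • w) := by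
        unfold isUnitVec
        have : ∀ p, ((t⁻¹ • w) p)^2 = t⁻¹^2 * (w p)^2 := fun p => by
          simp [Pi.smul_apply, smul_eq_mul]; ring
        rw [Finset.sum_congr rfl fun p _ => this p, ← Finset.mul_sum, ← hNdef, ← ht2]
        field_simp
      have hFw : F T (Function.update x a w) = N := by
        rw [F_update_expand, hNdef]
        exact Finset.sum_congr rfl fun p _ => by simp only [hw]; ring
      have hFs : F T (Function.update x a (t⁻¹ • w)) = t := by
        rw [F_update_smul, hFw, ← ht2]
        field_simp
      have := hM _ (update_unitFam hx (a := a) hunit)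
      rw [hFs] at this
      nlinarith
  have hkey : ∑ p, (w p - M * x a p)^2 ≤ 0 := by
    rw [sum_sq_expand w (x a) M]
    have hxa : ∑ p, (x a p)^2 = 1 := hx a
    rw [hxa, hA]
    nlinarith
  have hzero : ∀ p ∈ Finset.univ, (w p - M * x a p)^2 = 0 := by
    rw [← Finset.sum_eq_zero_iff_of_nonneg fun p _ => sq_nonneg _]
    exact le_antisymm hkey (Finset.sum_nonneg fun p _ => sq_nonneg _)
  intro p
  have := hzero p (Finset.mem_univ p)
  have := pow_eq_zero_iff (n := 2) (by norm_num) |>.mp this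
  linarith [sub_eq_zero.mp this]

lemma F_swap (T : (Fin d → Fin n) → ℝ) {a b : Fin d} (hab : a ≠ b)
    (hsymT : ∀ idx : Fin d → Fin n, T (idx ∘ Equiv.swap a b) = T idx)
    (x : Fin d → Fin n → ℝ) (y z : Fin n → ℝ) :
    F T (Function.update (Function.update x a y) b z)
      = F T (Function.update (Function.update x a z) b y) := by
  unfold F
  refine Fintype.sum_equiv (Equiv.arrowCongr (Equiv.swap a b) (Equiv.refl (Fin n)))
    _ _ fun idx => ?_
  have h1 : T idx = T (Equiv.arrowCongr (Equiv.swap a b) (Equiv.refl (Fin n)) idx) := by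
    have : (Equiv.arrowCongr (Equiv.swap a b) (Equiv.refl (Fin n)) idx) = idx ∘ Equiv.swap a b := by
      funext j; simp [Equiv.arrowCongr]
    rw [this, hsymT]
  rw [← h1]
  congr 1
  -- products
  refine Fintype.prod_equiv (Equiv.swap a b) _ _ fun j => ?_
  have harr : ∀ j', (Equiv.arrowCongr (Equiv.swap a b) (Equiv.refl (Fin n)) idx) j'
      = idx (Equiv.swap a b j') := by intro j'; simp [Equiv.arrowCongr]
  rw [harr]
  rcases eq_or_ne j a with h | h
  · subst h
    rw [Equiv.swap_apply_left]
    rw [Function.update_of_ne hab, Function.update_self, Function.update_self,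
      Equiv.swap_apply_right]
  · rcases eq_or_ne j b with h' | h'
    · subst h'
      rw [Equiv.swap_apply_right]
      rw [Function.update_self, Function.update_of_ne hab, Function.update_self,
        Equiv.swap_apply_left]
    · rw [Equiv.swap_apply_of_ne_of_ne h h']
      rw [Function.update_of_ne h', Function.update_of_ne h,
        Function.update_of_ne h', Function.update_of_ne h,
        Equiv.swap_apply_of_ne_of_ne h h']

lemma F_pair_smul (T : (Fin d → Fin n) → ℝ) (x : Fin d → Fin n → ℝ) {a b : Fin d}
    (hab : a ≠ b) (r : ℝ) (u : Fin n → ℝ) :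
    F T (Function.update (Function.update x a (r • u)) b (r • u))
      = r^2 * F T (Function.update (Function.update x a u) b u) := by
  rw [F_update_smul, Function.update_comm hab, F_update_smul,
    Function.update_comm hab.symm]
  ring

lemma B_self (T : (Fin d → Fin n) → ℝ) (M : ℝ) (hMpos : 0 < M)
    (hM : ∀ y, (∀ j, isUnitVec (y j)) → F T y ≤ M)
    (x : Fin d → Fin n → ℝ) (hx : ∀ j, isUnitVec (x j)) (hfx : F T x = M)
    {a b : Fin d} (hab : a ≠ b)
    (hsymT : ∀ idx : Fin d → Fin n, T (idx ∘ Equiv.swap a b) = T idx) :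
    F T (Function.update (Function.update x a (fun i => x a i + x b i)) b
        (fun i => x a i + x b i))
      = M * ∑ i, (x a i + x b i)^2 := by
  set u : Fin n → ℝ := fun i => x a i + x b i with hu
  set C : Fin n → Fin n → ℝ := fun q p =>
    F T (Function.update (Function.update x a (Pi.single q 1)) b (Pi.single p 1)) with hC
  have hCb : ∀ q : Fin n, ∑ p, x b p * C q p = M * x a q := by
    intro q
    have h1 := F_update_expand T (Function.update x a (Pi.single q 1)) b (x b)
    have h2 : Function.update (Function.update x a (Pi.single q 1)) b (x b)
        = Function.update x a (Pi.single q 1) := by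
      conv_lhs => rw [show x b = Function.update x a (Pi.single q 1) b from
        (Function.update_of_ne hab.symm _ x).symm]
      exact Function.update_eq_self _ _
    rw [h2] at h1
    rw [← h1, grad_eq T M hMpos hM x hx hfx a q]
  have hCa : ∀ q : Fin n, ∑ p, x a p * C q p = M * x b q := by
    intro q
    have h1 := F_update_expand T (Function.update x a (Pi.single q 1)) b (x a)
    have h3 : F T (Function.update (Function.update x a (Pi.single q 1)) b (x a))
        = F T (Function.update x b (Pi.single q 1)) := by
      rw [F_swap T hab hsymT, Function.update_comm hab]
      conv_lhs => rw [show x a = Function.update x b (Pi.single q 1) a from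
        (Function.update_of_ne hab _ x).symm]
      rw [Function.update_eq_self]
    rw [h3] at h1
    rw [← h1, grad_eq T M hMpos hM x hx hfx b q]
  -- expand B(u,u)
  have hexp : F T (Function.update (Function.update x a u) b u)
      = ∑ p, u p * ∑ q, u q * C q p := by
    rw [F_update_expand T (Function.update x a u) b u]
    refine Finset.sum_congr rfl fun p _ => ?_
    rw [Function.update_comm hab,
      F_update_expand T (Function.update x b (Pi.single p 1)) a u]
    congr 1
    refine Finset.sum_congr rfl fun q _ => ?_
    rw [Function.update_comm hab.symm]
  have hrow : ∀ q, ∑ p, u p * C q p = M * u q := by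
    intro q
    have : ∀ p, u p * C q p = x a p * C q p + x b p * C q p := by
      intro p; simp only [hu]; ring
    rw [Finset.sum_congr rfl fun p _ => this p, Finset.sum_add_distrib, hCa q, hCb q]
    simp only [hu]; ring
  rw [hexp]
  calc ∑ p, u p * ∑ q, u q * C q p
      = ∑ p, ∑ q, u q * (u p * C q p) := by
        refine Finset.sum_congr rfl fun p _ => ?_
        rw [Finset.mul_sum]
        exact Finset.sum_congr rfl fun q _ => by ring
    _ = ∑ q, ∑ p, u q * (u p * C q p) := Finset.sum_comm
    _ = ∑ q, u q * (M * u q) := by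
        refine Finset.sum_congr rfl fun q _ => ?_
        rw [← Finset.mul_sum, hrow q]
    _ = M * ∑ i, (x a i + x b i)^2 := by
        rw [Finset.mul_sum]
        refine Finset.sum_congr rfl fun i _ => ?_
        simp only [hu]; ring

lemma continuous_F (T : (Fin d → Fin n) → ℝ) : Continuous (F T) := by
  unfold F
  exact continuous_finset_sum _ fun idx _ =>
    continuous_const.mul (continuous_finset_prod _ fun j _ =>
      (continuous_apply (idx j)).comp (continuous_apply j))

lemma abs_le_one_of_unit {x : Fin n → ℝ} (hx : isUnitVec x) (i : Fin n) : |x i| ≤ 1 := by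
  have h1 : x i ^ 2 ≤ 1 := by
    rw [← hx]
    exact Finset.single_le_sum (fun i _ => sq_nonneg (x i)) (Finset.mem_univ i)
  exact (sq_le_one_iff_abs_le_one (a := x i)).mp h1

lemma isCompact_of_closed_unit {K : Set (Fin d → Fin n → ℝ)} (hcl : IsClosed K)
    (hsub : ∀ x ∈ K, ∀ j, isUnitVec (x j)) : IsCompact K := by
  refine IsCompact.of_isClosed_subset (isCompact_closedBall (0 : Fin d → Fin n → ℝ) 1)
    hcl ?_
  intro x hx
  rw [Metric.mem_closedBall]
  rw [dist_pi_le_iff (by norm_num)]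
  intro j
  rw [dist_pi_le_iff (by norm_num)]
  intro i
  have := abs_le_one_of_unit (hsub x hx j) i
  simpa [Real.dist_eq] using this

lemma F_neg (T : (Fin d → Fin n) → ℝ) (x : Fin d → Fin n → ℝ) :
    F (-T) x = - F T x := by
  unfold F
  rw [← Finset.sum_neg_distrib]
  exact Finset.sum_congr rfl fun idx _ => by simp

lemma sum_update (x : Fin d → Fin n → ℝ) (a : Fin d) (v : Fin n → ℝ) (i : Fin n) :
    ∑ j, Function.update x a v j i = (∑ j, x j i) - x a i + v i := by
  have h : ∀ j, Function.update x a v j i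
      = Function.update (fun j => x j i) a (v i) j := by
    intro j
    rcases eq_or_ne j a with h | h
    · subst h; simp
    · simp [Function.update_of_ne h]
  rw [Finset.sum_congr rfl fun j _ => h j,
    Finset.sum_update_of_mem (Finset.mem_univ a), ← Finset.erase_eq,
    Finset.sum_erase_eq_sub (Finset.mem_univ a)]
  ring

set_option maxHeartbeats 1000000 in
/-- Main combinatorial lemma: a maximizer of `|F T|` can be chosen symmetric. -/
lemma exists_symmetric_maximizer (hd : 2 ≤ d) (T : (Fin d → Fin n) → ℝ)
    (hsym : ∀ (σ : Equiv.Perm (Fin d)) (idx : Fin d → Fin n), T (idx ∘ σ) = T idx)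
    (M : ℝ) (hMpos : 0 < M)
    (hbound : ∀ x : Fin d → Fin n → ℝ, (∀ j, isUnitVec (x j)) → |F T x| ≤ M)
    (x₀ : Fin d → Fin n → ℝ) (hx₀ : ∀ j, isUnitVec (x₀ j)) (hx₀M : |F T x₀| = M) :
    ∃ u : Fin n → ℝ, isUnitVec u ∧ |F T (fun _ => u)| = M := by
  classical
  set K : Set (Fin d → Fin n → ℝ) :=
    {x | (∀ j, isUnitVec (x j)) ∧ |F T x| = M} with hK
  have hKunit : ∀ x ∈ K, ∀ j, isUnitVec (x j) := fun x hx => hx.1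
  have hKcl : IsClosed K := by
    have h1 : IsClosed {x : Fin d → Fin n → ℝ | ∀ j, isUnitVec (x j)} := by
      have : {x : Fin d → Fin n → ℝ | ∀ j, isUnitVec (x j)}
          = ⋂ j, {x | ∑ i, (x j i)^2 = 1} := by
        ext x; simp [isUnitVec, Set.mem_iInter]
      rw [this]
      refine isClosed_iInter fun j => isClosed_eq ?_ continuous_const
      exact continuous_finset_sum _ fun i _ =>
        ((continuous_apply i).comp (continuous_apply j)).pow 2
    have h2 : IsClosed {x : Fin d → Fin n → ℝ | |F T x| = M} :=
      isClosed_eq (continuous_F T).abs continuous_const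
    exact h1.inter h2
  have hKcompact : IsCompact K := isCompact_of_closed_unit hKcl hKunit
  have hKne : K.Nonempty := ⟨x₀, hx₀, hx₀M⟩
  set p : (Fin d → Fin n → ℝ) → ℝ := fun x => ∑ i, (∑ j, x j i)^2 with hp
  have hpcont : Continuous p := by
    refine continuous_finset_sum _ fun i _ => Continuous.pow ?_ 2
    exact continuous_finset_sum _ fun j _ =>
      (continuous_apply i).comp (continuous_apply j)
  obtain ⟨z, hzK, hzmax⟩ := hKcompact.exists_isMaxOn hKne hpcont.continuousOn
  -- claim: all slots of z are equal
  have hall : ∀ a b : Fin d, z a = z b := by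
    by_contra hcon
    push_neg at hcon
    obtain ⟨a, b, hne⟩ := hcon
    have hab : a ≠ b := by rintro rfl; exact hne rfl
    have hzunit := hzK.1
    have hzM := hzK.2
    set V : Fin n → ℝ := fun i => ∑ j, z j i with hV
    by_cases hopp : z a = -(z b)
    · -- opposite vectors: replace one by the other
      have hopp' : z b = -(z a) := by rw [hopp]; simp
      have hpz : p z = ∑ i, V i ^ 2 := rfl
      have hF1 : F T (Function.update z b (z a)) = - F T z := by
        rw [hopp, F_update_neg, Function.update_eq_self]
      have hF2 : F T (Function.update z a (z b)) = - F T z := by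
        rw [hopp', F_update_neg, Function.update_eq_self]
      have hy1K : Function.update z b (z a) ∈ K :=
        ⟨update_unitFam hzunit (hzunit a), by rw [hF1, abs_neg]; exact hzM⟩
      have hy2K : Function.update z a (z b) ∈ K :=
        ⟨update_unitFam hzunit (hzunit b), by rw [hF2, abs_neg]; exact hzM⟩
      have hsum1 : ∀ i, ∑ j, Function.update z b (z a) j i = V i - (-2) * z a i := by
        intro i
        rw [sum_update]
        have h2 : z b i = -(z a i) := by rw [hopp']; simp
        rw [h2]; simp only [hV]; ring
      have hsum2 : ∀ i, ∑ j, Function.update z a (z b) j i = V i - 2 * z a i := by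
        intro i
        rw [sum_update]
        have h2 : z b i = -(z a i) := by rw [hopp']; simp
        rw [h2]; simp only [hV]; ring
      have hpy1 : p (Function.update z b (z a))
          = (∑ i, V i ^ 2) + 4 * (∑ i, z a i * V i) + 4 := by
        show (∑ i, (∑ j, Function.update z b (z a) j i)^2) = _
        rw [Finset.sum_congr rfl fun i _ => by rw [hsum1 i], sum_sq_expand V (z a) (-2),
          hzunit a]
        ring
      have hpy2 : p (Function.update z a (z b))
          = (∑ i, V i ^ 2) - 4 * (∑ i, z a i * V i) + 4 := by
        show (∑ i, (∑ j, Function.update z a (z b) j i)^2) = _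
        rw [Finset.sum_congr rfl fun i _ => by rw [hsum2 i], sum_sq_expand V (z a) 2,
          hzunit a]
        ring
      have hm1 := hzmax hy1K
      have hm2 := hzmax hy2K
      simp only [Set.mem_setOf_eq] at hm1 hm2
      rw [hpy1] at hm1
      rw [hpy2] at hm2
      rw [hpz] at hm1 hm2
      linarith
    · -- not opposite
      have hM1 : ∀ y, (∀ j, isUnitVec (y j)) → F T y ≤ M :=
        fun y hy => (abs_le.mp (hbound y hy)).2
      have hswapT : ∀ idx : Fin d → Fin n, T (idx ∘ Equiv.swap a b) = T idx :=
        fun idx => hsym (Equiv.swap a b) idx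
      set u : Fin n → ℝ := fun i => z a i + z b i with hu
      set t2 : ℝ := ∑ i, (u i)^2 with ht2
      have ht2nonneg : 0 ≤ t2 := Finset.sum_nonneg fun i _ => sq_nonneg _
      have ht2ne : t2 ≠ 0 := by
        intro h0
        apply hopp
        funext i
        have hz0 : ∀ i ∈ Finset.univ, (u i)^2 = 0 :=
          (Finset.sum_eq_zero_iff_of_nonneg fun i _ => sq_nonneg _).mp h0.symm.symm
        have := pow_eq_zero_iff (n := 2) (by norm_num) |>.mp (hz0 i (Finset.mem_univ i))
        simp only [hu] at this
        simp only [Pi.neg_apply]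
        linarith
      have ht2pos : 0 < t2 := lt_of_le_of_ne ht2nonneg (Ne.symm ht2ne)
      have hdiff : ∑ i, (z a i - z b i)^2 = 4 - t2 := by
        have h1 : ∑ i, ((z a i - z b i)^2 + (u i)^2)
            = ∑ i, (2 * (z a i)^2 + 2 * (z b i)^2) :=
          Finset.sum_congr rfl fun i _ => by simp only [hu]; ring
        rw [Finset.sum_add_distrib, Finset.sum_add_distrib] at h1
        have ha := hzunit a
        have hb := hzunit b
        have h2 : ∑ i, 2 * (z a i)^2 = 2 := by
          rw [← Finset.mul_sum, hzunit a]; ring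
        have h3 : ∑ i, 2 * (z b i)^2 = 2 := by
          rw [← Finset.mul_sum, hzunit b]; ring
        rw [h2, h3, ← ht2] at h1
        linarith
      have hdpos : 0 < ∑ i, (z a i - z b i)^2 := by
        rcases (Finset.sum_nonneg fun i _ => sq_nonneg (z a i - z b i)).lt_or_eq with h | h
        · exact h
        · exfalso
          apply hne
          funext i
          have hz0 : ∀ i ∈ Finset.univ, (z a i - z b i)^2 = 0 :=
            (Finset.sum_eq_zero_iff_of_nonneg fun i _ => sq_nonneg _).mp h.symm
          have := pow_eq_zero_iff (n := 2) (by norm_num) |>.mp (hz0 i (Finset.mem_univ i))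
          linarith
      have ht2lt4 : t2 < 4 := by linarith
      set t : ℝ := Real.sqrt t2 with ht
      have htpos : 0 < t := Real.sqrt_pos.mpr ht2pos
      have ht2eq : t^2 = t2 := Real.sq_sqrt ht2nonneg
      have htlt2 : t < 2 := by nlinarith
      set v : Fin n → ℝ := t⁻¹ • u with hv
      have hvunit : isUnitVec v := by
        unfold isUnitVec
        have : ∀ i, (v i)^2 = t⁻¹^2 * (u i)^2 := fun i => by
          simp only [hv, Pi.smul_apply, smul_eq_mul]; ring
        rw [Finset.sum_congr rfl fun i _ => this i, ← Finset.mul_sum, ← ht2, ← ht2eq]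
        field_simp
      have hnvunit : isUnitVec (-v) := by
        unfold isUnitVec
        have : ∀ i, ((-v) i)^2 = (v i)^2 := fun i => by simp
        rw [Finset.sum_congr rfl fun i _ => this i]
        exact hvunit
      have hBuu : F T (Function.update (Function.update z a u) b u) = F T z * t2 := by
        rcases (abs_eq hMpos.le).mp hzM with hs | hs
        · have hB := B_self T M hMpos hM1 z hzunit hs hab hswapT
          rw [hs, ht2]
          exact hB
        · have hM1' : ∀ y, (∀ j, isUnitVec (y j)) → F (-T) y ≤ M := fun y hy => by
            rw [F_neg]
            have := (abs_le.mp (hbound y hy)).1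
            linarith
          have hs' : F (-T) z = M := by rw [F_neg, hs]; ring
          have hswap' : ∀ idx : Fin d → Fin n, (-T) (idx ∘ Equiv.swap a b) = (-T) idx :=
            fun idx => by simp only [Pi.neg_apply, hswapT idx]
          have hB := B_self (-T) M hMpos hM1' z hzunit hs' hab hswap'
          rw [F_neg] at hB
          rw [hs, ht2]
          linarith
      have hF1 : F T (Function.update (Function.update z a v) b v) = F T z := by
        have h := F_pair_smul T z hab t⁻¹ u
        rw [hBuu] at h
        rw [hv, h, ← ht2eq]
        field_simp
      have hF2 : F T (Function.update (Function.update z a (-v)) b (-v)) = F T z := by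
        have hneg : -v = (-t⁻¹) • u := by rw [hv, neg_smul]
        have h := F_pair_smul T z hab (-t⁻¹) u
        rw [hBuu] at h
        rw [hneg, h, ← ht2eq]
        field_simp
      have hy1K : Function.update (Function.update z a v) b v ∈ K :=
        ⟨update_unitFam (update_unitFam hzunit hvunit) hvunit, by rw [hF1]; exact hzM⟩
      have hy2K : Function.update (Function.update z a (-v)) b (-v) ∈ K :=
        ⟨update_unitFam (update_unitFam hzunit hnvunit) hnvunit, by rw [hF2]; exact hzM⟩
      set c1 : ℝ := 1 - 2 * t⁻¹ with hc1
      set c2 : ℝ := 1 + 2 * t⁻¹ with hc2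
      have hc1neg : c1 < 0 := by
        have h1 : c1 * t = t - 2 := by rw [hc1]; field_simp
        nlinarith
      have hc2pos : 0 < c2 := by
        have : 0 < t⁻¹ := inv_pos.mpr htpos
        rw [hc2]; linarith
      have hsum1 : ∀ i, ∑ j, Function.update (Function.update z a v) b v j i
          = V i - c1 * u i := by
        intro i
        rw [sum_update, sum_update, Function.update_of_ne hab.symm]
        simp only [hV, hu, hv, hc1, Pi.smul_apply, smul_eq_mul]
        ring
      have hsum2 : ∀ i, ∑ j, Function.update (Function.update z a (-v)) b (-v) j i
          = V i - c2 * u i := by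
        intro i
        rw [sum_update, sum_update, Function.update_of_ne hab.symm]
        simp only [hV, hu, hv, hc2, Pi.neg_apply, Pi.smul_apply, smul_eq_mul]
        ring
      have hpz : p z = ∑ i, V i ^ 2 := rfl
      have hpy1 : p (Function.update (Function.update z a v) b v)
          = (∑ i, V i ^ 2) - 2*c1*(∑ i, u i * V i) + c1^2 * t2 := by
        show (∑ i, (∑ j, Function.update (Function.update z a v) b v j i)^2) = _
        rw [Finset.sum_congr rfl fun i _ => by rw [hsum1 i], sum_sq_expand V u c1, ← ht2]
      have hpy2 : p (Function.update (Function.update z a (-v)) b (-v))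
          = (∑ i, V i ^ 2) - 2*c2*(∑ i, u i * V i) + c2^2 * t2 := by
        show (∑ i, (∑ j, Function.update (Function.update z a (-v)) b (-v) j i)^2) = _
        rw [Finset.sum_congr rfl fun i _ => by rw [hsum2 i], sum_sq_expand V u c2, ← ht2]
      have hm1 := hzmax hy1K
      have hm2 := hzmax hy2K
      simp only [Set.mem_setOf_eq] at hm1 hm2
      rw [hpy1, hpz] at hm1
      rw [hpy2, hpz] at hm2
      set ip : ℝ := ∑ i, u i * V i with hip
      have h1 : c1^2 * t2 - 2*c1*ip ≤ 0 := by linarith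
      have h2 : c2^2 * t2 - 2*c2*ip ≤ 0 := by linarith
      have hA : c2 * (c1^2 * t2 - 2*c1*ip) ≤ 0 :=
        mul_nonpos_of_nonneg_of_nonpos hc2pos.le h1
      have hB : (-c1) * (c2^2 * t2 - 2*c2*ip) ≤ 0 :=
        mul_nonpos_of_nonneg_of_nonpos (by linarith) h2
      have hC : c1 * c2 * (c1 - c2) * t2 ≤ 0 := by
        have hsumAB := add_nonpos hA hB
        have hring : c1 * c2 * (c1 - c2) * t2
            = c2 * (c1^2 * t2 - 2*c1*ip) + (-c1) * (c2^2 * t2 - 2*c2*ip) := by ring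
        rw [hring]
        exact hsumAB
      have h5 : c1 * c2 < 0 := mul_neg_of_neg_of_pos hc1neg hc2pos
      have h6 : c1 - c2 < 0 := by linarith
      have h7 : 0 < c1 * c2 * (c1 - c2) := mul_pos_of_neg_of_neg h5 h6
      have h8 : 0 < c1 * c2 * (c1 - c2) * t2 := mul_pos h7 ht2pos
      linarith
  -- conclude
  have hz0 : z = fun _ => z ⟨0, by omega⟩ := by
    funext j; exact hall j ⟨0, by omega⟩
  exact ⟨z ⟨0, by omega⟩, hzK.1 ⟨0, by omega⟩, by rw [← hz0]; exact hzK.2⟩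


lemma sum_sq_expand_idx {ι : Type*} [Fintype ι] (v w : ι → ℝ) (c : ℝ) :
    ∑ i, (v i - c * w i)^2
      = (∑ i, (v i)^2) - 2*c*(∑ i, v i * w i) + c^2 * ∑ i, (w i)^2 := by
  rw [Finset.mul_sum, Finset.mul_sum, ← Finset.sum_sub_distrib, ← Finset.sum_add_distrib]
  exact Finset.sum_congr rfl fun i _ => by ring

lemma unit_single (p : Fin n) : isUnitVec (Pi.single p 1 : Fin n → ℝ) := by
  unfold isUnitVec
  have h : ∀ i, ((Pi.single p 1 : Fin n → ℝ) i)^2 = if i = p then 1 else 0 := by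
    intro i
    rcases eq_or_ne i p with h | h
    · subst h; simp
    · simp [Pi.single_apply, h]
  rw [Finset.sum_congr rfl fun i _ => h i, Finset.sum_ite_eq' Finset.univ p fun _ => (1:ℝ)]
  simp

lemma dtens_sq (x : Fin d → Fin n → ℝ) (hx : ∀ j, isUnitVec (x j)) :
    ∑ idx, (dtens x idx)^2 = 1 := by
  unfold dtens
  have h1 : ∀ idx : Fin d → Fin n, (∏ j, x j (idx j))^2 = ∏ j, (x j (idx j))^2 :=
    fun idx => by rw [← Finset.prod_pow]
  rw [Finset.sum_congr rfl fun idx _ => h1 idx]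
  have h2 := Finset.prod_univ_sum (fun _ : Fin d => (Finset.univ : Finset (Fin n)))
    (fun j i => (x j i)^2)
  rw [Fintype.piFinset_univ] at h2
  rw [← h2]
  rw [Finset.prod_congr rfl fun j _ => hx j]
  simp

lemma hs_sq (A W : (Fin d → Fin n) → ℝ) (s : ℝ) :
    ∑ idx, ((A - s • W) idx)^2
      = (∑ idx, (A idx)^2) - 2*s*(∑ idx, A idx * W idx) + s^2 * ∑ idx, (W idx)^2 := by
  have h : ∀ idx, (A - s • W) idx = A idx - s * W idx := fun idx => by simp
  rw [Finset.sum_congr rfl fun idx _ => by rw [h idx]]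
  exact sum_sq_expand_idx A W s

end Stmt10Aux

/-- Every real symmetric tensor `T ∈ Sym(n, d)` (`n, d ≥ 2`) has a symmetric best rank one
approximation `λ · u^{⊗ d}`. -/
theorem stmt10 {n d : ℕ} (hn : 2 ≤ n) (hd : 2 ≤ d) (T : (Fin d → Fin n) → ℝ)
    (hsym : ∀ (σ : Equiv.Perm (Fin d)) (idx : Fin d → Fin n), T (idx ∘ σ) = T idx) :
    ∃ (lam : ℝ) (u : Fin n → ℝ), isUnitVec u ∧
      ∀ (s : ℝ) (x : Fin d → Fin n → ℝ), (∀ j, isUnitVec (x j)) →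
        hsNorm (T - lam • dtens (fun _ : Fin d => u)) ≤ hsNorm (T - s • dtens x) := by
  classical
  open Stmt10Aux in
  have key : ∃ (lam : ℝ) (u : Fin n → ℝ), isUnitVec u ∧
      lam = Stmt10Aux.F T (fun _ => u) ∧
      (∀ x : Fin d → Fin n → ℝ, (∀ j, isUnitVec (x j)) →
        |Stmt10Aux.F T x| ≤ |Stmt10Aux.F T (fun _ => u)|) := by
    set Sset : Set (Fin d → Fin n → ℝ) := {x | ∀ j, isUnitVec (x j)} with hS
    have hScl : IsClosed Sset := by
      have : Sset = ⋂ j, {x : Fin d → Fin n → ℝ | ∑ i, (x j i)^2 = 1} := by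
        ext x; simp [hS, isUnitVec, Set.mem_iInter]
      rw [this]
      refine isClosed_iInter fun j => isClosed_eq ?_ continuous_const
      exact continuous_finset_sum _ fun i _ =>
        ((continuous_apply i).comp (continuous_apply j)).pow 2
    have hScompact : IsCompact Sset :=
      Stmt10Aux.isCompact_of_closed_unit hScl (fun x hx => hx)
    have hSne : Sset.Nonempty :=
      ⟨fun _ => Pi.single (⟨0, by omega⟩ : Fin n) 1, fun j => Stmt10Aux.unit_single _⟩
    have hcont : Continuous fun x => |Stmt10Aux.F T x| := (Stmt10Aux.continuous_F T).abs
    obtain ⟨x₀, hx₀S, hmax⟩ := hScompact.exists_isMaxOn hSne hcont.continuousOn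
    set M : ℝ := |Stmt10Aux.F T x₀| with hM
    have hMnonneg : 0 ≤ M := abs_nonneg _
    have hbound : ∀ x : Fin d → Fin n → ℝ, (∀ j, isUnitVec (x j)) →
        |Stmt10Aux.F T x| ≤ M := fun x hx => hmax hx
    have hsub : ∃ u : Fin n → ℝ, isUnitVec u ∧ |Stmt10Aux.F T (fun _ => u)| = M := by
      rcases eq_or_lt_of_le hMnonneg with h0 | hpos
      · refine ⟨Pi.single (⟨0, by omega⟩ : Fin n) 1, Stmt10Aux.unit_single _, ?_⟩
        have h1 := hbound (fun _ => Pi.single (⟨0, by omega⟩ : Fin n) 1)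
          (fun j => Stmt10Aux.unit_single _)
        have h2 := abs_nonneg (Stmt10Aux.F T (fun _ : Fin d =>
          Pi.single (⟨0, by omega⟩ : Fin n) 1))
        linarith
      · exact Stmt10Aux.exists_symmetric_maximizer hd T hsym M hpos hbound x₀ hx₀S rfl
    obtain ⟨u, huunit, huM⟩ := hsub
    exact ⟨Stmt10Aux.F T (fun _ => u), u, huunit, rfl,
      fun x hx => by rw [huM]; exact hbound x hx⟩
  obtain ⟨lam, u, huunit, hlam, hbnd⟩ := key
  refine ⟨lam, u, huunit, ?_⟩
  intro s x hx
  unfold hsNorm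
  apply Real.sqrt_le_sqrt
  have hL := Stmt10Aux.hs_sq T (dtens fun _ : Fin d => u) lam
  have hR := Stmt10Aux.hs_sq T (dtens x) s
  have hFu : ∑ idx, T idx * dtens (fun _ : Fin d => u) idx
      = Stmt10Aux.F T (fun _ => u) := rfl
  have hFx : ∑ idx, T idx * dtens x idx = Stmt10Aux.F T x := rfl
  have h1 : ∑ idx, (dtens (fun _ : Fin d => u) idx)^2 = 1 :=
    Stmt10Aux.dtens_sq _ (fun _ => huunit)
  have h2 : ∑ idx, (dtens x idx)^2 = 1 := Stmt10Aux.dtens_sq _ hx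
  rw [hL, hR, hFu, hFx, h1, h2, ← hlam]
  have hFxb := hbnd x hx
  rw [← hlam] at hFxb
  have hsq : (Stmt10Aux.F T x)^2 ≤ lam^2 := by
    have ha := abs_nonneg (Stmt10Aux.F T x)
    have hb := sq_abs (Stmt10Aux.F T x)
    have hc := sq_abs lam
    nlinarith
  nlinarith [sq_nonneg (s - Stmt10Aux.F T x)]
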